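/- (Optimality of inverse-variance weighting) Let Ω1, Ω2 be n×n symmetric positive definite matrices. Among all matrices A ∈ ℝ^{n×n} (with B = I − A), the covariance AΩ1Aᵀ + BΩ2Bᵀ is minimized in the Loewner order at A* = Ω2(Ω1 + Ω2)⁻¹: for every A, AΩ1Aᵀ + (I−A)Ω2(I−A)ᵀ − (Ω1⁻¹ + Ω2⁻¹)⁻¹ is positive semidefinite, with equality at A = A*. -/

import Mathlib

open Matrix

theorem stmt_16 (n : ℕ)
    (O1 O2 : Matrix (Fin n) (Fin n) ℝ)
    (h1 : O1.PosDef) (h2 : O2.PosDef) :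
    (∀ A : Matrix (Fin n) (Fin n) ℝ,
      (A * O1 * Aᵀ + (1 - A) * O2 * (1 - A)ᵀ - (O1⁻¹ + O2⁻¹)⁻¹).PosSemidef) ∧
    (O2 * (O1 + O2)⁻¹) * O1 * (O2 * (O1 + O2)⁻¹)ᵀ
        + (1 - O2 * (O1 + O2)⁻¹) * O2 * (1 - O2 * (O1 + O2)⁻¹)ᵀ
      = (O1⁻¹ + O2⁻¹)⁻¹ := by
  have hS : (O1 + O2).PosDef := h1.add h2
  set S : Matrix (Fin n) (Fin n) ℝ := O1 + O2 with hSdef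
  have hSd : IsUnit S.det := isUnit_iff_ne_zero.2 (ne_of_gt hS.det_pos)
  have h1d : IsUnit O1.det := isUnit_iff_ne_zero.2 (ne_of_gt h1.det_pos)
  have h2d : IsUnit O2.det := isUnit_iff_ne_zero.2 (ne_of_gt h2.det_pos)
  have hSsym : Sᵀ = S := by
    simpa [Matrix.conjTranspose_eq_transpose_of_trivial] using hS.isHermitian.eq
  have h2sym : O2ᵀ = O2 := by
    simpa [Matrix.conjTranspose_eq_transpose_of_trivial] using h2.isHermitian.eq
  set T : Matrix (Fin n) (Fin n) ℝ := S⁻¹ with hTdef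
  have hST : S * T = 1 := Matrix.mul_nonsing_inv S hSd
  have hTS : T * S = 1 := Matrix.nonsing_inv_mul S hSd
  have hTsym : Tᵀ = T := by
    rw [hTdef, Matrix.transpose_nonsing_inv, hSsym]
  have hTS' : ∀ X : Matrix (Fin n) (Fin n) ℝ, T * (S * X) = X := by
    intro X; rw [← Matrix.mul_assoc, hTS, Matrix.one_mul]
  have hST' : ∀ X : Matrix (Fin n) (Fin n) ℝ, S * (T * X) = X := by
    intro X; rw [← Matrix.mul_assoc, hST, Matrix.one_mul]
  -- the inverse-variance identity
  have hinv : (O1⁻¹ + O2⁻¹)⁻¹ = O2 * T * O1 := by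
    have hsum : O1⁻¹ + O2⁻¹ = O1⁻¹ * S * O2⁻¹ := by
      rw [hSdef, Matrix.mul_add, Matrix.add_mul, Matrix.nonsing_inv_mul O1 h1d,
        Matrix.one_mul, Matrix.mul_assoc, Matrix.mul_nonsing_inv O2 h2d,
        Matrix.mul_one, add_comm]
    rw [hsum, Matrix.mul_inv_rev, Matrix.mul_inv_rev,
      Matrix.nonsing_inv_nonsing_inv O1 h1d, Matrix.nonsing_inv_nonsing_inv O2 h2d,
      Matrix.mul_assoc]
  -- key algebraic identity
  have key : ∀ A : Matrix (Fin n) (Fin n) ℝ,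
      A * O1 * Aᵀ + (1 - A) * O2 * (1 - A)ᵀ
        = (A - O2 * T) * S * (A - O2 * T)ᵀ + O2 * T * O1 := by
    intro A
    have hO2TS : O2 * (T * (O1 + O2)) = O2 := by
      rw [← hSdef, hTS, Matrix.mul_one]
    have hO1 : O1 = S - O2 := by rw [hSdef, add_sub_cancel_right]
    rw [hO1]
    simp only [Matrix.transpose_sub, Matrix.transpose_mul, Matrix.transpose_one,
      hTsym, h2sym, Matrix.sub_mul, Matrix.mul_sub, Matrix.one_mul, Matrix.mul_one,
      Matrix.mul_assoc, hTS', hST', hO2TS, hTS]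
    abel
  constructor
  · intro A
    have hps : ((A - O2 * T) * S * (A - O2 * T)ᵀ).PosSemidef := by
      have := hS.posSemidef.mul_mul_conjTranspose_same (A - O2 * T)
      simpa [Matrix.conjTranspose_eq_transpose_of_trivial] using this
    have : A * O1 * Aᵀ + (1 - A) * O2 * (1 - A)ᵀ - (O1⁻¹ + O2⁻¹)⁻¹
        = (A - O2 * T) * S * (A - O2 * T)ᵀ := by
      rw [key A, hinv, add_sub_cancel_right]
    rw [this]; exact hps
  · have := key (O2 * T)
    simp only [sub_self, Matrix.zero_mul, Matrix.transpose_zero, Matrix.mul_zero,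
      zero_add] at this
    rw [this, hinv]
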